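/- For any classical instance I = (A, ι^n) of unsigned strings such that b_τ(I) > 0 and Σ_A \ Σ_{ι^n} = ∅ (A contains no α-element), there exists a transposition τ such that b_τ(A·τ, ι^n) ≤ b_τ(A, ι^n) − 1, i.e., τ removes at least one transposition breakpoint of A. -/

import Mathlib

/-- A gene of the origin string: either a label in `{1, …, n}` (`some x`) or an
`α`-element (`none`), i.e. a gene absent from the target genome. -/
abbrev Gene := Option ℕ

/-- `A` is a valid origin string for a classical instance `I = (A, ι^n)`:
all its labels lie in `{1, …, n}` and each label occurs at most once
(`α`-elements may repeat). -/
def ValidString (n : ℕ) (A : List Gene) : Prop :=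
  (∀ x : ℕ, some x ∈ A → 1 ≤ x ∧ x ≤ n) ∧ (∀ x : ℕ, A.count (some x) ≤ 1)

/-- The extended version of `A`: `A_0 = 0` and `A_{|A|+1} = n+1` are appended. -/
def extStr (n : ℕ) (A : List Gene) : List Gene :=
  some 0 :: (A ++ [some (n + 1)])

/-- `|Σ_{ι^n} \ Σ_A|`: the number of labels of the target absent from `A`. -/
def missingCount (n : ℕ) (A : List Gene) : ℕ :=
  ((Finset.Icc 1 n).filter (fun x => some x ∉ A)).card

/-- `posterior(x, I)`: the smallest common label greater than `x`
(`n+1` if there is none, `α` for `x = α`). -/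
def postOf (n : ℕ) (A : List Gene) : Gene → Gene
  | none => none
  | some x =>
    if h : ((Finset.Icc 1 n).filter (fun y => some y ∈ A ∧ x < y)).Nonempty then
      some (((Finset.Icc 1 n).filter (fun y => some y ∈ A ∧ x < y)).min' h)
    else
      some (n + 1)

/-- `anterior(x, I)`: the largest common label smaller than `x`
(`0` if there is none, `α` for `x = α`). -/
def antOf (n : ℕ) (A : List Gene) : Gene → Gene
  | none => none
  | some x =>
    if h : ((Finset.Icc 1 n).filter (fun y => some y ∈ A ∧ y < x)).Nonempty then
      some (((Finset.Icc 1 n).filter (fun y => some y ∈ A ∧ y < x)).max' h)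
    else
      some 0

/-- `b_τ(I)`: the number of transposition breakpoints of the instance `I = (A, ι^n)`. -/
def bT (n : ℕ) (A : List Gene) : ℕ :=
  ((Finset.range (A.length + 1)).filter (fun t =>
    (extStr n A).getD (t + 1) none ≠ postOf n A ((extStr n A).getD t none))).card

/-- `b_ρ(I)`: the number of unsigned-reversal breakpoints of the instance `I = (A, ι^n)`. -/
def bR (n : ℕ) (A : List Gene) : ℕ :=
  ((Finset.range (A.length + 1)).filter (fun t =>
    (extStr n A).getD (t + 1) none ≠ postOf n A ((extStr n A).getD t none) ∧
    (extStr n A).getD (t + 1) none ≠ antOf n A ((extStr n A).getD t none))).card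

/-- The reversal `ρ(i,j)`, `1 ≤ i ≤ j ≤ |A|`, with explicit parameters `i`, `j`:
it reverses the segment `(A_i … A_j)`, transforming `A` into `A'`. -/
def RevAt (A : List Gene) (i j : ℕ) (A' : List Gene) : Prop :=
  1 ≤ i ∧ i ≤ j ∧ j ≤ A.length ∧
  A' = A.take (i - 1) ++ ((A.drop (i - 1)).take (j - i + 1)).reverse ++ A.drop j

/-- `A'` is obtained from `A` by a reversal. -/
def RevN (A A' : List Gene) : Prop := ∃ i j : ℕ, RevAt A i j A'

/-- `A'` is obtained from `A` by a transposition `τ(i,j,k)`, `1 ≤ i < j < k ≤ |A|+1`,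
exchanging the adjacent segments `(A_i … A_{j−1})` and `(A_j … A_{k−1})`. -/
def TranspN (A A' : List Gene) : Prop :=
  ∃ i j k : ℕ, 1 ≤ i ∧ i < j ∧ j < k ∧ k ≤ A.length + 1 ∧
    A' = A.take (i - 1) ++ (A.drop (j - 1)).take (k - j) ++
         (A.drop (i - 1)).take (j - i) ++ A.drop (k - 1)

/-- `A'` is obtained from `A` by an insertion `φ(i,σ)`: a nonempty repetition-free
string `σ`, consisting only of labels of `Σ_{ι^n} \ Σ_A`, is inserted after position `i`. -/
def InsN (n : ℕ) (A A' : List Gene) : Prop :=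
  ∃ (i : ℕ) (σ : List Gene), i ≤ A.length ∧ σ ≠ [] ∧ σ.Nodup ∧
    (∀ e ∈ σ, ∃ x : ℕ, e = some x ∧ 1 ≤ x ∧ x ≤ n ∧ some x ∉ A) ∧
    A' = A.take i ++ σ ++ A.drop i

/-- `A'` is obtained from `A` by a deletion `ψ(i,j)`: the segment `(A_i … A_j)`,
consisting only of `α`-elements, is removed. -/
def DelN (A A' : List Gene) : Prop :=
  ∃ i j : ℕ, 1 ≤ i ∧ i ≤ j ∧ j ≤ A.length ∧
    (∀ e ∈ (A.drop (i - 1)).take (j - i + 1), e = none) ∧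
    A' = A.take (i - 1) ++ A.drop j

/-- The kinds of operations on strings. -/
inductive StrOp : Type
  | rev
  | transp
  | ins
  | del
deriving DecidableEq

def strOpRel (n : ℕ) : StrOp → List Gene → List Gene → Prop
  | StrOp.rev => RevN
  | StrOp.transp => TranspN
  | StrOp.ins => InsN n
  | StrOp.del => DelN

/-- The target string `ι^n = (1 2 … n)`. -/
def idList (n : ℕ) : List Gene := (List.range n).map (fun x => some (x + 1))

/-- `A` can be transformed into `ι^n` by a sequence of `s` operations of the model `M`. -/
def Reaches (n : ℕ) (M : Set StrOp) : ℕ → List Gene → Prop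
  | 0, A => A = idList n
  | s + 1, A => ∃ op ∈ M, ∃ A', strOpRel n op A A' ∧ Reaches n M s A'

/-- `d_M(A, ι^n)`: the minimum number of operations of the model `M` transforming
`A` into `ι^n` (`∞` if no such sequence exists). -/
noncomputable def distM (n : ℕ) (M : Set StrOp) (A : List Gene) : ℕ∞ :=
  sInf {c : ℕ∞ | ∃ s : ℕ, Reaches n M s A ∧ c = (s : ℕ∞)}

/-- The model `M^{φψ}_ρ`: reversals, insertions and deletions. -/
def Mrev : Set StrOp := {StrOp.rev, StrOp.ins, StrOp.del}
/-- The model `M^{φψ}_τ`: transpositions, insertions and deletions. -/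
def Mtra : Set StrOp := {StrOp.transp, StrOp.ins, StrOp.del}
/-- The model `M^{φψ}_{ρ,τ}`: reversals, transpositions, insertions and deletions. -/
def Mrevtra : Set StrOp := {StrOp.rev, StrOp.transp, StrOp.ins, StrOp.del}

/-- `(u, v)` is an unsigned-reversal breakpoint of the instance `I = (A, ι^n)`. -/
def IsBreakR (n : ℕ) (A : List Gene) (u v : Gene) : Prop :=
  v ≠ postOf n A u ∧ v ≠ antOf n A u

/-- `A` has at least one decreasing strip: either some non-breakpoint adjacency is
decreasing (the right element is the anterior of the left one), or some interior
non-`α` element is a singleton strip (it has breakpoints on both sides). -/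
def HasDecStrip (n : ℕ) (A : List Gene) : Prop :=
  (∃ t : ℕ, t + 1 < (extStr n A).length ∧
    (extStr n A).getD t none ≠ none ∧
    (extStr n A).getD (t + 1) none = antOf n A ((extStr n A).getD t none)) ∨
  (∃ t : ℕ, 1 ≤ t ∧ t + 1 < (extStr n A).length ∧
    (extStr n A).getD t none ≠ none ∧
    IsBreakR n A ((extStr n A).getD (t - 1) none) ((extStr n A).getD t none) ∧
    IsBreakR n A ((extStr n A).getD t none) ((extStr n A).getD (t + 1) none))

private def pairs : List Gene → List (Gene × Gene)
  | a :: b :: l => (a, b) :: pairs (b :: l)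
  | _ => []

private lemma pairs_append : ∀ (X Y : List Gene) (hX : X ≠ []) (hY : Y ≠ []),
    pairs (X ++ Y) = pairs X ++ (X.getLast hX, Y.head hY) :: pairs Y
  | [], _, hX, _ => absurd rfl hX
  | [a], b :: Y, _, _ => by simp [pairs]
  | a :: c :: X, Y, hX, hY => by
    have h2 : (c :: X : List Gene) ≠ [] := by simp
    have ih := pairs_append (c :: X) Y h2 hY
    have hne : ((c :: X : List Gene) ++ Y) ≠ [] := by simp
    rw [show ((a :: c :: X : List Gene) ++ Y) = a :: ((c :: X) ++ Y) by simp]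
    show (a, ((c::X) ++ Y).head hne) :: pairs ((c :: X) ++ Y) = _
    rw [ih]
    simp [pairs]

private lemma countP_pairs (p : Gene → Gene → Prop) [∀ u v, Decidable (p u v)] :
    ∀ (l : List Gene), (pairs l).countP (fun q => decide (p q.1 q.2)) =
      ((Finset.range (l.length - 1)).filter
        (fun t => p (l.getD t none) (l.getD (t + 1) none))).card
  | [] => by simp [pairs]
  | [a] => by simp [pairs]
  | a :: b :: l => by
    have ih := countP_pairs p (b :: l)
    rw [Finset.card_filter] at *
    simp only [pairs, List.countP_cons, List.length_cons, Nat.add_sub_cancel] at *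
    rw [Finset.sum_range_succ']
    simp only [List.getD_cons_succ, List.getD_cons_zero]
    rw [ih]
    by_cases h : p a b <;> simp [h, add_comm]

private lemma bT_eq (n : ℕ) (A : List Gene) :
    bT n A = (pairs (extStr n A)).countP
      (fun q => decide (q.2 ≠ postOf n A q.1)) := by
  rw [countP_pairs (fun u v => v ≠ postOf n A u) (extStr n A)]
  have h : (extStr n A).length - 1 = A.length + 1 := by simp [extStr]
  rw [h, bT]

private lemma postOf_congr (n : ℕ) (A A' : List Gene)
    (h : ∀ x : ℕ, some x ∈ A ↔ some x ∈ A') :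
    postOf n A = postOf n A' := by
  funext g
  cases g with
  | none => rfl
  | some x =>
    have he : ((Finset.Icc 1 n).filter (fun y => some y ∈ A ∧ x < y)) =
        ((Finset.Icc 1 n).filter (fun y => some y ∈ A' ∧ x < y)) := by
      apply Finset.filter_congr
      intro y _
      simp [h y]
    simp only [postOf, he]

private lemma countP_pairs_append (g : Gene × Gene → Bool) (X Y : List Gene)
    (hX : X ≠ []) (hY : Y ≠ []) :
    (pairs (X ++ Y)).countP g =
      (pairs X).countP g + (if g (X.getLast hX, Y.head hY) then 1 else 0)
        + (pairs Y).countP g := by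
  rw [pairs_append X Y hX hY, List.countP_append, List.countP_cons]
  by_cases h : g (X.getLast hX, Y.head hY) <;> simp [h] <;> omega

private lemma head_getD (l : List Gene) (h : l ≠ []) : l.head h = l.getD 0 none := by
  cases l with
  | nil => exact absurd rfl h
  | cons a t => rfl

private lemma getLast_getD (l : List Gene) (h : l ≠ []) :
    l.getLast h = l.getD (l.length - 1) none := by
  rw [List.getLast_eq_getElem, List.getD_eq_getElem]

/-- For any classical instance `I = (A, ι^n)` of unsigned strings such
that `b_τ(I) > 0` and `Σ_A \ Σ_{ι^n} = ∅` (A contains no α-element), there exists a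
transposition removing at least one transposition breakpoint of `A`. -/
theorem transposition_removes_breakpoint
    (n : ℕ) (A : List Gene) (hA : ValidString n A)
    (hb : 0 < bT n A) (hNoAlpha : (none : Gene) ∉ A) :
    ∃ A' : List Gene, TranspN A A' ∧ bT n A' + 1 ≤ bT n A := by
  set L := A.length with hL
  set E := extStr n A with hE
  have hElen : E.length = L + 2 := by simp [hE, extStr, hL]
  have hnodupA : A.Nodup := by
    rw [List.nodup_iff_count_le_one]
    intro g
    have hcb : @List.count Gene instBEqOfDecidableEq g A = A.count g := by
      unfold List.count
      apply List.countP_congr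
      intro a _
      rw [Bool.eq_iff_iff]
      simp [beq_iff_eq]
    cases g with
    | none => rw [List.count_eq_zero.mpr hNoAlpha]; omega
    | some z => exact hA.2 z
  have hEnodup : E.Nodup := by
    rw [hE]; unfold extStr
    rw [List.nodup_cons, List.nodup_append]
    refine ⟨?_, hnodupA, by simp, ?_⟩
    · intro hmem
      rcases List.mem_append.mp hmem with h | h
      · exact absurd ((hA.1 0 h).1) (by norm_num)
      · simp at h
    · intro g hg1 b hb
      simp only [List.mem_singleton] at hb
      subst hb
      intro hgb
      subst hgb
      have := (hA.1 (n+1) hg1).2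
      omega
  -- the value function
  set v : ℕ → ℕ := fun i => (E.getD i none).getD 0 with hvdef
  have hnoneE : (none : Gene) ∉ E := by
    rw [hE]; unfold extStr
    simp [hNoAlpha]
  have hv : ∀ i, i ≤ L + 1 → E.getD i none = some (v i) := by
    intro i hi
    have hlt : i < E.length := by omega
    rcases hm : E[i] with _ | z
    · exact absurd (hm ▸ List.getElem_mem hlt) hnoneE
    · rw [hvdef]
      simp only [List.getD_eq_getElem E none hlt, hm, Option.getD_some]
  have hv0 : v 0 = 0 := by rw [hvdef, hE]; rfl
  have hvlast : v (L + 1) = n + 1 := by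
    have h1 : E.getD (L+1) none = some (n+1) := by
      rw [hE]; unfold extStr
      rw [List.getD_cons_succ, List.getD_append_right A _ none L (by omega)]
      simp [hL]
    have h2 := hv (L+1) (by omega)
    rw [h1] at h2
    exact (Option.some_inj.mp h2).symm
  have hvA : ∀ i, 1 ≤ i → i ≤ L → some (v i) ∈ A := by
    intro i h1 h2
    obtain ⟨k, rfl⟩ := Nat.exists_eq_add_of_le h1
    have hk : k < A.length := by omega
    have hg : E.getD (1 + k) none = A.getD k none := by
      rw [hE]; unfold extStr
      rw [show 1 + k = k + 1 by omega, List.getD_cons_succ,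
        List.getD_append A _ none k hk]
    have h3 := hv (1+k) (by omega)
    rw [hg, List.getD_eq_getElem A none hk] at h3
    rw [← h3]
    exact List.getElem_mem hk
  have hvbound : ∀ i, 1 ≤ i → i ≤ L → 1 ≤ v i ∧ v i ≤ n :=
    fun i h1 h2 => hA.1 _ (hvA i h1 h2)
  have hinj : ∀ i j, i ≤ L + 1 → j ≤ L + 1 → v i = v j → i = j := by
    intro i j hi hj hvij
    have h1 := hv i hi
    have h2 := hv j hj
    have hi' : i < E.length := by omega
    have hj' : j < E.length := by omega
    rw [List.getD_eq_getElem E none hi'] at h1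
    rw [List.getD_eq_getElem E none hj'] at h2
    exact (hEnodup.getElem_inj_iff).mp (by rw [h1, h2, hvij])
  -- the successor function
  set nxt : ℕ → ℕ := fun u =>
    if h : ((Finset.Icc 1 n).filter (fun y => some y ∈ A ∧ u < y)).Nonempty then
      ((Finset.Icc 1 n).filter (fun y => some y ∈ A ∧ u < y)).min' h
    else n + 1 with hnxtdef
  have hpost : ∀ u : ℕ, postOf n A (some u) = some (nxt u) := by
    intro u
    rw [hnxtdef]
    simp only [postOf]
    split <;> rfl
  have nxt_le : ∀ u z, some z ∈ A → u < z → nxt u ≤ z := by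
    intro u z hz huz
    have hzI : z ∈ (Finset.Icc 1 n).filter (fun y => some y ∈ A ∧ u < y) := by
      rw [Finset.mem_filter, Finset.mem_Icc]
      exact ⟨⟨(hA.1 z hz).1, (hA.1 z hz).2⟩, hz, huz⟩
    rw [hnxtdef]
    simp only
    rw [dif_pos ⟨z, hzI⟩]
    exact Finset.min'_le _ z hzI
  have nxt_gt : ∀ u, u ≤ n → u < nxt u := by
    intro u hu
    rw [hnxtdef]
    simp only
    split
    · next h =>
      have := Finset.min'_mem _ h
      rw [Finset.mem_filter] at this
      exact this.2.2
    · omega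
  have nxt_S : ∀ u, nxt u = n + 1 ∨ (some (nxt u) ∈ A ∧ 1 ≤ nxt u ∧ nxt u ≤ n) := by
    intro u
    rw [hnxtdef]
    simp only
    split
    · next h =>
      have := Finset.min'_mem _ h
      rw [Finset.mem_filter, Finset.mem_Icc] at this
      exact Or.inr ⟨this.2.1, this.1.1, this.1.2⟩
    · exact Or.inl rfl
  -- breakpoints
  set Bk := (Finset.range (L + 1)).filter
      (fun t => E.getD (t + 1) none ≠ postOf n A (E.getD t none)) with hBkdef
  have hbT : bT n A = Bk.card := by rw [hBkdef, hE, hL]; rfl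
  have hbrk_iff : ∀ t, t ≤ L → (t ∈ Bk ↔ v (t + 1) ≠ nxt (v t)) := by
    intro t ht
    rw [hBkdef, Finset.mem_filter, Finset.mem_range]
    rw [hv t (by omega), hv (t+1) (by omega), hpost (v t)]
    constructor
    · intro h hc
      exact h.2 (by rw [hc])
    · intro h
      exact ⟨by omega, fun hc => h (Option.some_inj.mp hc)⟩
  have hBkne : Bk.Nonempty := by
    rw [← Finset.card_pos, ← hbT]
    exact hb
  set t := Bk.min' hBkne with htdef
  have htmem : t ∈ Bk := Finset.min'_mem _ _
  have htL : t ≤ L := by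
    have := (Finset.mem_filter.mp (hBkdef ▸ htmem)).1
    rw [Finset.mem_range] at this
    omega
  have htB : v (t + 1) ≠ nxt (v t) := (hbrk_iff t htL).mp htmem
  have hchain0 : ∀ i, i < t → v (i + 1) = nxt (v i) := by
    intro i hi
    by_contra hne
    have hmem : i ∈ Bk := (hbrk_iff i (by omega)).mpr hne
    have := Finset.min'_le Bk i hmem
    omega
  -- chain lemmas
  have chain_cover : ∀ a b, a ≤ b → (∀ i, a ≤ i → i < b → v (i + 1) = nxt (v i)) →
      ∀ z, some z ∈ A → v a < z → z ≤ v b → ∃ i, a < i ∧ i ≤ b ∧ v i = z := by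
    intro a b hab
    induction b, hab using Nat.le_induction with
    | base => intro _ z _ h1 h2; omega
    | succ b hb ih =>
      intro hch z hz h1 h2
      by_cases hc : z ≤ v b
      · obtain ⟨i, hi1, hi2, hi3⟩ := ih (fun i u1 u2 => hch i u1 (by omega)) z hz h1 hc
        exact ⟨i, hi1, by omega, hi3⟩
      · have he : v (b + 1) = nxt (v b) := hch b hb (by omega)
        have hle : nxt (v b) ≤ z := nxt_le _ z hz (by omega)
        exact ⟨b + 1, by omega, le_refl _, by omega⟩
  have chain_mono : ∀ a b, a ≤ b → b ≤ L + 1 →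
      (∀ i, a ≤ i → i < b → v (i + 1) = nxt (v i)) → v a ≤ v b := by
    intro a b hab
    induction b, hab using Nat.le_induction with
    | base => intro _ _; exact le_refl _
    | succ b hb ih =>
      intro hbL hch
      have hvb : v b ≤ n := by
        rcases Nat.eq_zero_or_pos b with h0 | h0
        · subst h0; omega
        · exact (hvbound b h0 (by omega)).2
      have h1 : v a ≤ v b := ih (by omega) (fun i u1 u2 => hch i u1 (by omega))
      have h2 := nxt_gt (v b) hvb
      have h3 := hch b hb (by omega)
      omega
  set x := v t with hx
  have hxn : x ≤ n := by
    rcases Nat.eq_zero_or_pos t with h0 | h0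
    · rw [hx, h0]; omega
    · exact (hx ▸ (hvbound t h0 htL).2)
  set y := nxt x with hy
  have hxy : x < y := hy ▸ nxt_gt x hxn
  have hmono : ∀ i, i ≤ t → v i ≤ x := by
    intro i hi
    have := chain_mono i t hi (by omega) (fun j hj1 hj2 => hchain0 j (by omega))
    omega
  have hcov : ∀ z, some z ∈ A → z ≤ x → ∃ i, i ≤ t ∧ v i = z := by
    intro z hz h2
    have hz1 : 1 ≤ z := (hA.1 z hz).1
    obtain ⟨i, hi1, hi2, hi3⟩ := chain_cover 0 t (by omega)
      (fun i _ h => hchain0 i h) z hz (by omega) (by omega)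
    exact ⟨i, hi2, hi3⟩
  have hyS : some y ∈ A ∧ 1 ≤ y ∧ y ≤ n := by
    rcases nxt_S x with hcase | hcase
    · exfalso
      rcases Nat.lt_or_ge t L with htl | htl
      · have hw := hvA (t + 1) (by omega) (by omega)
        have hwb := hvbound (t + 1) (by omega) (by omega)
        rcases Nat.lt_or_ge x (v (t + 1)) with hgt | hle
        · have := nxt_le x (v (t + 1)) hw hgt
          omega
        · obtain ⟨i, hi1, hi2⟩ := hcov (v (t + 1)) hw hle
          have := hinj i (t + 1) (by omega) (by omega) hi2
          omega
      · have htL2 : t = L := by omega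
        apply htB
        rw [htL2, hvlast]
        omega
    · exact hcase
  have hmemA : ∀ z, some z ∈ A → ∃ i, 1 ≤ i ∧ i ≤ L ∧ v i = z := by
    intro z hz
    obtain ⟨k, hk, hAk⟩ := List.mem_iff_getElem.mp hz
    refine ⟨k + 1, by omega, by omega, ?_⟩
    have hgd : E.getD (k + 1) none = some z := by
      rw [hE]; unfold extStr
      rw [List.getD_cons_succ, List.getD_append A _ none k (by omega),
        List.getD_eq_getElem A none (by omega), hAk]
    have h2 := hv (k + 1) (by omega)
    rw [hgd] at h2
    exact (Option.some_inj.mp h2).symm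
  obtain ⟨q, hq1, hqL, hqv⟩ := hmemA y hyS.1
  have hqt : t + 2 ≤ q := by
    rcases Nat.lt_or_ge t q with h | h
    · rcases Nat.lt_or_ge (t + 1) q with h2 | h2
      · omega
      · exfalso
        apply htB
        have hq : q = t + 1 := by omega
        rw [← hq, hqv]
    · exfalso
      have := hmono q (by omega)
      omega
  have hbq : y ≠ nxt (v (q - 1)) := by
    intro hcon
    have hu : some (v (q - 1)) ∈ A := hvA (q - 1) (by omega) (by omega)
    have hub := hvbound (q - 1) (by omega) (by omega)
    rcases Nat.lt_trichotomy (v (q - 1)) x with h | h | h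
    · have ht1 : 1 ≤ t := by
        by_contra h0
        have h0' : t = 0 := by omega
        rw [h0'] at hx
        omega
      have hxA : some x ∈ A := hx ▸ hvA t ht1 htL
      have := nxt_le (v (q - 1)) x hxA h
      omega
    · have := hinj (q - 1) t (by omega) (by omega) (by omega)
      omega
    · have h1 := nxt_le x (v (q - 1)) hu h
      have h2 := nxt_gt (v (q - 1)) hub.2
      omega
  have hr : ∃ r, q ≤ r ∧ r ≤ L ∧ v (r + 1) ≠ nxt (v r) := by
    by_contra hcon
    push_neg at hcon
    have hch : ∀ i, q ≤ i → i < L + 1 → v (i + 1) = nxt (v i) :=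
      fun i u1 u2 => hcon i u1 (by omega)
    have hw : some (v (t + 1)) ∈ A := hvA (t + 1) (by omega) (by omega)
    have hwb := hvbound (t + 1) (by omega) (by omega)
    have hwx : x < v (t + 1) := by
      rcases Nat.lt_or_ge x (v (t + 1)) with h | h
      · exact h
      · exfalso
        obtain ⟨i, hi1, hi2⟩ := hcov (v (t + 1)) hw h
        have := hinj i (t + 1) (by omega) (by omega) hi2
        omega
    have hwy : y < v (t + 1) := by
      have h1 := nxt_le x (v (t + 1)) hw hwx
      have h2 : v (t + 1) ≠ y := by
        intro hh
        have := hinj (t + 1) q (by omega) (by omega) (by omega)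
        omega
      omega
    obtain ⟨i, hi1, hi2, hi3⟩ := chain_cover q (L + 1) (by omega) hch
      (v (t + 1)) hw (by omega) (by omega)
    have hiL : i ≤ L := by
      by_contra hgt
      have hieq : i = L + 1 := by omega
      rw [hieq, hvlast] at hi3
      omega
    have := hinj i (t + 1) (by omega) (by omega) hi3
    omega
  obtain ⟨r, hrq, hrL, hrB⟩ := hr
  -- the decomposition
  set P := A.take t with hPdef
  set B := (A.drop t).take (q - 1 - t) with hBdef
  set C := (A.drop (q - 1)).take (r - q + 1) with hCdef
  set Sf := A.drop r with hSfdef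
  have hPlen : P.length = t := by rw [hPdef, List.length_take]; omega
  have hBlen : B.length = q - 1 - t := by
    rw [hBdef, List.length_take, List.length_drop]; omega
  have hClen : C.length = r - q + 1 := by
    rw [hCdef, List.length_take, List.length_drop]; omega
  have e3 : C ++ Sf = A.drop (q - 1) := by
    rw [hCdef, hSfdef]
    have h := List.take_append_drop (r - q + 1) (A.drop (q - 1))
    rw [List.drop_drop, show q - 1 + (r - q + 1) = r by omega] at h
    exact h
  have e2 : B ++ A.drop (q - 1) = A.drop t := by
    rw [hBdef]
    have h := List.take_append_drop (q - 1 - t) (A.drop t)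
    rw [List.drop_drop, show t + (q - 1 - t) = q - 1 by omega] at h
    exact h
  have hAdec : A = P ++ (B ++ (C ++ Sf)) := by
    rw [e3, e2, hPdef, List.take_append_drop]
  set A2 := P ++ (C ++ (B ++ Sf)) with hA2def
  refine ⟨A2, ⟨t + 1, q, r + 1, by omega, by omega, by omega, by omega, ?_⟩, ?_⟩
  · rw [show t + 1 - 1 = t by omega, show r + 1 - 1 = r by omega,
      show r + 1 - q = r - q + 1 by omega, show q - (t + 1) = q - 1 - t by omega]
    rw [hA2def, ← hPdef, ← hBdef, ← hCdef, ← hSfdef]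
    simp [List.append_assoc]
  -- the counting
  set X : List Gene := some 0 :: P with hXdef
  set W : List Gene := Sf ++ [some (n + 1)] with hWdef
  have hXne : X ≠ [] := by rw [hXdef]; simp
  have hBne : B ≠ [] := by
    have : 0 < B.length := by omega
    exact List.ne_nil_of_length_pos this
  have hCne : C ≠ [] := by
    have : 0 < C.length := by omega
    exact List.ne_nil_of_length_pos this
  have hWne : W ≠ [] := by rw [hWdef]; simp
  have hWlen : W.length = L - r + 1 := by
    rw [hWdef, List.length_append, hSfdef, List.length_drop]
    simp [hL]
  have hEdec : E = X ++ (B ++ (C ++ W)) := by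
    rw [hE]; unfold extStr
    conv_lhs => rw [hAdec]
    rw [hXdef, hWdef]
    simp [List.append_assoc]
  have hE2 : extStr n A2 = X ++ (C ++ (B ++ W)) := by
    unfold extStr
    rw [hA2def, hXdef, hWdef]
    simp [List.append_assoc]
  have hmem2 : ∀ z : ℕ, some z ∈ A2 ↔ some z ∈ A := by
    intro z
    conv_rhs => rw [hAdec]
    rw [hA2def]
    simp only [List.mem_append]
    constructor <;> (intro h; rcases h with h | h | h | h <;> simp [h])
  have hpc : postOf n A2 = postOf n A := postOf_congr n A2 A hmem2
  set g : Gene × Gene → Bool := fun p => decide (p.2 ≠ postOf n A p.1) with hgdef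
  have h1 : bT n A = (pairs (X ++ (B ++ (C ++ W)))).countP g := by
    rw [hgdef, bT_eq n A, ← hE, hEdec]
  have h2 : bT n A2 = (pairs (X ++ (C ++ (B ++ W)))).countP g := by
    rw [hgdef, bT_eq n A2, hE2, hpc]
  -- heads and lasts
  have hXlast : X.getLast hXne = some x := by
    rw [getLast_getD]
    have hXlen : X.length = t + 1 := by rw [hXdef]; simp [hPlen]
    rw [hXlen, show t + 1 - 1 = t by omega]
    have hg1 : E.getD t none = X.getD t none := by
      rw [hEdec, List.getD_append X _ none t (by omega)]
    rw [← hg1, hv t (by omega), hx]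
  have hXlen : X.length = t + 1 := by rw [hXdef]; simp [hPlen]
  have hBgetD : ∀ k, k < B.length → B.getD k none = E.getD (t + 1 + k) none := by
    intro k hk
    rw [hEdec, List.getD_append_right X _ none (t + 1 + k) (by omega),
      show t + 1 + k - X.length = k by omega,
      List.getD_append B _ none k hk]
  have hCgetD : ∀ k, k < C.length → C.getD k none = E.getD (q + k) none := by
    intro k hk
    rw [hEdec, List.getD_append_right X _ none (q + k) (by omega),
      List.getD_append_right B _ none (q + k - X.length) (by omega),
      show q + k - X.length - B.length = k by omega,
      List.getD_append C _ none k hk]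
  have hWgetD : ∀ k, k < W.length → W.getD k none = E.getD (r + 1 + k) none := by
    intro k hk
    rw [hEdec, List.getD_append_right X _ none (r + 1 + k) (by omega),
      List.getD_append_right B _ none (r + 1 + k - X.length) (by omega),
      List.getD_append_right C _ none (r + 1 + k - X.length - B.length) (by omega),
      show r + 1 + k - X.length - B.length - C.length = k by omega]
  have hBhead : B.head hBne = some (v (t + 1)) := by
    rw [head_getD, hBgetD 0 (by omega), Nat.add_zero, hv (t + 1) (by omega)]
  have hBlast : B.getLast hBne = some (v (q - 1)) := by
    rw [getLast_getD, hBgetD (B.length - 1) (by omega),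
      show t + 1 + (B.length - 1) = q - 1 by omega, hv (q - 1) (by omega)]
  have hChead : C.head hCne = some y := by
    rw [head_getD, hCgetD 0 (by omega), Nat.add_zero, hv q (by omega), hqv]
  have hClast : C.getLast hCne = some (v r) := by
    rw [getLast_getD, hCgetD (C.length - 1) (by omega),
      show q + (C.length - 1) = r by omega, hv r (by omega)]
  have hWhead : W.head hWne = some (v (r + 1)) := by
    rw [head_getD, hWgetD 0 (by omega), Nat.add_zero, hv (r + 1) (by omega)]
  have hne1 : B ++ (C ++ W) ≠ [] := by simp [hBne]
  have hne2 : C ++ W ≠ [] := by simp [hCne]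
  have hne3 : C ++ (B ++ W) ≠ [] := by simp [hCne]
  have hne4 : B ++ W ≠ [] := by simp [hBne]
  have hh1 : (B ++ (C ++ W)).head hne1 = some (v (t + 1)) := by
    rw [List.head_append_left hBne, hBhead]
  have hh2 : (C ++ W).head hne2 = some y := by
    rw [List.head_append_left hCne, hChead]
  have hh3 : (C ++ (B ++ W)).head hne3 = some y := by
    rw [List.head_append_left hCne, hChead]
  have hh4 : (B ++ W).head hne4 = some (v (t + 1)) := by
    rw [List.head_append_left hBne, hBhead]
  -- evaluate junction indicators
  have hg1 : g (some x, some (v (t + 1))) = true := by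
    rw [hgdef]
    simp only [decide_eq_true_iff]
    rw [hpost x]
    intro hc
    apply htB
    rw [hy]
    exact Option.some_inj.mp hc
  have hg2 : g (some (v (q - 1)), some y) = true := by
    rw [hgdef]
    simp only [decide_eq_true_iff]
    rw [hpost (v (q - 1))]
    intro hc
    exact hbq (Option.some_inj.mp hc)
  have hg3 : g (some (v r), some (v (r + 1))) = true := by
    rw [hgdef]
    simp only [decide_eq_true_iff]
    rw [hpost (v r)]
    intro hc
    exact hrB (Option.some_inj.mp hc)
  have hg0 : g (some x, some y) = false := by
    rw [hgdef]
    simp only [decide_eq_false_iff_not, not_not]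
    rw [hpost x, hy]
  rw [h1, h2,
    countP_pairs_append g X (B ++ (C ++ W)) hXne hne1,
    countP_pairs_append g B (C ++ W) hBne hne2,
    countP_pairs_append g C W hCne hWne,
    countP_pairs_append g X (C ++ (B ++ W)) hXne hne3,
    countP_pairs_append g C (B ++ W) hCne hne4,
    countP_pairs_append g B W hBne hWne,
    hXlast, hh1, hh2, hh3, hh4, hBlast, hClast, hWhead, hg0, hg1, hg2, hg3]
  set j1 := (if g (some (v r), some (v (t + 1))) then 1 else 0) with hj1def
  have hj1 : j1 ≤ 1 := by rw [hj1def]; split <;> omega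
  set j2 := (if g (some (v (q - 1)), some (v (r + 1))) then 1 else 0) with hj2def
  have hj2 : j2 ≤ 1 := by rw [hj2def]; split <;> omega
  simp only [Bool.false_eq_true, if_false, if_true]
  omega
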